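/- The number of binary tree topologies with n ≥ 1 distinguishable (labeled) leaves is (2n-3)!! (the double factorial), where (−1)!! = 1 for n = 1. -/

import Mathlib

/-- Rooted binary trees with leaves labelled by `α`. -/
inductive BT (α : Type) : Type
  | leaf : α → BT α
  | node : BT α → BT α → BT α

namespace BT

/-- The multiset of leaf labels of a binary tree. -/
def leaves {α : Type} : BT α → Multiset α
  | .leaf a => {a}
  | .node l r => l.leaves + r.leaves

/-- Two binary trees are equivalent as *unordered* topologies if one can be obtained
from the other by swapping the children of internal nodes. -/
inductive Equiv {α : Type} : BT α → BT α → Prop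
  | refl (t : BT α) : Equiv t t
  | symm {s t : BT α} : Equiv s t → Equiv t s
  | trans {s t u : BT α} : Equiv s t → Equiv t u → Equiv s u
  | swap (l r : BT α) : Equiv (.node l r) (.node r l)
  | congr {l l' r r' : BT α} :
      Equiv l l' → Equiv r r' → Equiv (.node l r) (.node l' r')

end BT

deriving instance DecidableEq for BT

set_option linter.unusedSectionVars false

namespace BT

variable {α : Type}

theorem leaves_ne_zero (t : BT α) : t.leaves ≠ 0 := by
  induction t with
  | leaf a => simp [leaves]
  | node l r ihl ihr =>
    intro h
    have : l.leaves = 0 := by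
      have := congrArg Multiset.card h
      simp only [leaves, Multiset.card_add, Multiset.card_zero] at this
      exact Multiset.card_eq_zero.mp (by omega)
    exact ihl this

theorem card_leaves_pos (t : BT α) : 0 < Multiset.card t.leaves := by
  rcases Nat.eq_zero_or_pos (Multiset.card t.leaves) with h | h
  · exact absurd (Multiset.card_eq_zero.mp h) t.leaves_ne_zero
  · exact h

theorem eq_leaf_of_card_leaves_eq_one {t : BT α} (h : Multiset.card t.leaves = 1) :
    ∃ a, t = leaf a := by
  cases t with
  | leaf a => exact ⟨a, rfl⟩
  | node l r =>
    exfalso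
    have := l.card_leaves_pos
    have := r.card_leaves_pos
    simp [leaves] at h
    omega
end BT

set_option linter.unusedSectionVars false
namespace BT
variable {α : Type} [DecidableEq α]

/-- All trees obtained by inserting leaf `a` at some position of `t`. -/
def ins (a : α) : BT α → List (BT α)
  | .leaf b => [.node (.leaf a) (.leaf b), .node (.leaf b) (.leaf a)]
  | .node l r =>
      .node (.leaf a) (.node l r) :: .node (.node l r) (.leaf a) ::
        ((ins a l).map (fun x => .node x r) ++ (ins a r).map (fun y => .node l y))

/-- Delete the (unique) leaf `a`. -/
def del (a : α) : BT α → BT α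
  | .leaf b => .leaf b
  | .node l r =>
      if l = .leaf a then r
      else if r = .leaf a then l
      else if a ∈ l.leaves then .node (del a l) r else .node l (del a r)

theorem length_ins (a : α) (t : BT α) :
    (ins a t).length = 2 * (2 * Multiset.card t.leaves - 1) := by
  induction t with
  | leaf b => simp [ins, leaves]
  | node l r ihl ihr =>
    have hl := l.card_leaves_pos
    have hr := r.card_leaves_pos
    simp only [ins, List.length_cons, List.length_append, List.length_map, ihl, ihr,
      leaves, Multiset.card_add]
    omega

theorem leaves_of_mem_ins {a : α} {t t' : BT α} (h : t' ∈ ins a t) :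
    t'.leaves = a ::ₘ t.leaves := by
  induction t generalizing t' with
  | leaf b =>
    simp only [ins, List.mem_cons, List.mem_singleton, List.not_mem_nil] at h
    rcases h with rfl | rfl | h
    · simp [leaves]
    · show ({b} : Multiset α) + {a} = a ::ₘ {b}
      rw [add_comm]; rfl
    · cases h
  | node l r ihl ihr =>
    simp only [ins, List.mem_cons, List.mem_append, List.mem_map] at h
    rcases h with rfl | rfl | ⟨x, hx, rfl⟩ | ⟨y, hy, rfl⟩
    · simp [leaves]
    · show (l.leaves + r.leaves) + {a} = a ::ₘ (l.leaves + r.leaves)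
      rw [add_comm]; simp [Multiset.singleton_add]
    · show x.leaves + r.leaves = a ::ₘ (l.leaves + r.leaves)
      rw [ihl hx, Multiset.cons_add]
    · show l.leaves + y.leaves = a ::ₘ (l.leaves + r.leaves)
      rw [ihr hy]
      rw [show a ::ₘ r.leaves = {a} + r.leaves from rfl,
        show a ::ₘ (l.leaves + r.leaves) = {a} + (l.leaves + r.leaves) from rfl]
      exact add_left_comm _ _ _

theorem mem_leaves_of_mem_ins {a : α} {t t' : BT α} (h : t' ∈ ins a t) :
    a ∈ t'.leaves := by rw [leaves_of_mem_ins h]; exact Multiset.mem_cons_self a _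

theorem ne_leaf_of_mem_ins {a : α} {t t' : BT α} (h : t' ∈ ins a t) (b : α) :
    t' ≠ leaf b := by
  intro he
  have h1 := leaves_of_mem_ins h
  rw [he] at h1
  have h2 := congrArg Multiset.card h1
  rw [Multiset.card_cons, show (leaf b : BT α).leaves = {b} from rfl,
    Multiset.card_singleton] at h2
  have h3 := t.card_leaves_pos
  omega

theorem nodup_ins {a : α} {t : BT α} (ha : a ∉ t.leaves) : (ins a t).Nodup := by
  induction t with
  | leaf b =>
    have hab : a ≠ b := by simpa [leaves] using ha
    simp only [ins, List.nodup_cons, List.mem_singleton, List.not_mem_nil,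
      not_false_iff, List.nodup_nil, and_true]
    intro h; injection h with h1 h2; injection h1 with h1; exact hab h1
  | node l r ihl ihr =>
    have hal : a ∉ l.leaves := fun h => ha (by simp [leaves, h])
    have har : a ∉ r.leaves := fun h => ha (by simp [leaves, h])
    simp only [ins, List.nodup_cons, List.mem_cons, List.mem_append, List.mem_map]
    refine ⟨?_, ?_, ?_⟩
    · rintro (h | ⟨x, hx, h⟩ | ⟨y, hy, h⟩)
      · injection h with h1 h2; cases h1
      · injection h with h1 h2; exact (ne_leaf_of_mem_ins hx a) h1
      · injection h with h1 h2; exact hal (by rw [h1]; simp [leaves])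
    · rintro (⟨x, hx, h⟩ | ⟨y, hy, h⟩)
      · injection h with h1 h2; exact har (by rw [h2]; simp [leaves])
      · injection h with h1 h2; exact (ne_leaf_of_mem_ins hy a) h2
    · rw [List.nodup_append]
      refine ⟨(ihl hal).map (fun x y hxy => by injection hxy),
        (ihr har).map (fun x y hxy => by injection hxy), ?_⟩
      intro u hu v hv huv
      subst huv
      simp only [List.mem_map] at hu hv
      obtain ⟨x, hx, rfl⟩ := hu
      obtain ⟨y, hy, h⟩ := hv
      injection h.symm with h1 h2
      exact hal (h1 ▸ mem_leaves_of_mem_ins hx)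

theorem del_of_mem_ins {a : α} {t t' : BT α} (ha : a ∉ t.leaves) (h : t' ∈ ins a t) :
    del a t' = t := by
  induction t generalizing t' with
  | leaf b =>
    have hab : a ≠ b := by simpa [leaves] using ha
    simp only [ins, List.mem_cons, List.mem_singleton, List.not_mem_nil, or_false] at h
    rcases h with rfl | rfl
    · simp [del]
    · rw [del]
      rw [if_neg (by intro h; injection h with h1; exact hab h1.symm), if_pos rfl]
  | node l r ihl ihr =>
    have hal : a ∉ l.leaves := fun h => ha (by simp [leaves, h])
    have har : a ∉ r.leaves := fun h => ha (by simp [leaves, h])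
    simp only [ins, List.mem_cons, List.mem_append, List.mem_map] at h
    rcases h with rfl | rfl | ⟨x, hx, rfl⟩ | ⟨y, hy, rfl⟩
    · simp [del]
    · rw [del, if_neg, if_pos rfl]
      intro h; injection h
    · rw [del, if_neg (ne_leaf_of_mem_ins hx a), if_neg, if_pos (mem_leaves_of_mem_ins hx),
        ihl hal hx]
      intro h; rw [h] at har; exact har (by simp [leaves])
    · rw [del, if_neg, if_neg (ne_leaf_of_mem_ins hy a), if_neg hal, ihr har hy]
      intro h; rw [h] at hal; exact hal (by simp [leaves])

theorem mem_ins_del {a : α} {t' : BT α} (hn : t'.leaves.Nodup) (ha : a ∈ t'.leaves)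
    (hne : ∀ b, t' ≠ leaf b) : t' ∈ ins a (del a t') := by
  induction t' with
  | leaf b => exact absurd rfl (hne b)
  | node l r ihl ihr =>
    have hmem : a ∈ l.leaves ∨ a ∈ r.leaves := by
      simpa [leaves, Multiset.mem_add] using ha
    have hnl : l.leaves.Nodup := (Multiset.nodup_add.mp (by simpa [leaves] using hn)).1
    have hnr : r.leaves.Nodup := (Multiset.nodup_add.mp (by simpa [leaves] using hn)).2.1
    have hdisj := (Multiset.nodup_add.mp (by simpa [leaves] using hn)).2.2
    rcases hmem with hl | hr
    · have har : a ∉ r.leaves := fun h => (Multiset.disjoint_left.mp hdisj hl) h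
      by_cases hleaf : l = leaf a
      · rw [del, if_pos hleaf, hleaf]
        cases r with
        | leaf c => simp [ins]
        | node r1 r2 => simp [ins]
      · have hrleaf : r ≠ leaf a := fun h => har (by rw [h]; simp [leaves])
        rw [del, if_neg hleaf, if_neg hrleaf, if_pos hl]
        have : l ∈ ins a (del a l) := by
          apply ihl hnl hl
          intro b hb
          rw [hb] at hl
          have : a = b := by simpa [leaves] using hl
          exact hleaf (by rw [hb, this])
        rw [ins]
        simp only [List.mem_cons, List.mem_append, List.mem_map]
        exact Or.inr (Or.inr (Or.inl ⟨l, this, rfl⟩))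
    · have hal : a ∉ l.leaves := fun h => (Multiset.disjoint_left.mp hdisj h) hr
      have hlleaf : l ≠ leaf a := fun h => hal (by rw [h]; simp [leaves])
      by_cases hleaf : r = leaf a
      · rw [del, if_neg hlleaf, if_pos hleaf, hleaf]
        cases l with
        | leaf c => simp [ins]
        | node l1 l2 => simp [ins]
      · rw [del, if_neg hlleaf, if_neg hleaf, if_neg hal]
        have : r ∈ ins a (del a r) := by
          apply ihr hnr hr
          intro b hb
          rw [hb] at hr
          have : a = b := by simpa [leaves] using hr
          exact hleaf (by rw [hb, this])
        rw [ins]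
        simp only [List.mem_cons, List.mem_append, List.mem_map]
        exact Or.inr (Or.inr (Or.inr ⟨r, this, rfl⟩))

theorem card_subtype_leaves : ∀ (m : ℕ) (s : Multiset α), Multiset.card s = m →
    s.Nodup → s ≠ 0 →
    Nat.card {t : BT α // t.leaves = s} =
      2 ^ (m - 1) * Nat.doubleFactorial (2 * m - 3) := by
  intro m
  induction m with
  | zero =>
    intro s hcard _ hne
    exact absurd (Multiset.card_eq_zero.mp hcard) hne
  | succ m ih =>
    intro s hcard hnd hne
    rcases Nat.eq_zero_or_pos m with rfl | hm
    · -- card s = 1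
      obtain ⟨a, rfl⟩ := Multiset.card_eq_one.mp hcard
      have : Unique {t : BT α // t.leaves = ({a} : Multiset α)} := by
        refine ⟨⟨⟨leaf a, rfl⟩⟩, ?_⟩
        rintro ⟨t, ht⟩
        obtain ⟨b, rfl⟩ := eq_leaf_of_card_leaves_eq_one
          (by rw [ht]; simp)
        have : b = a := by
          have : ({b} : Multiset α) = {a} := ht
          simpa using this
        subst this
        rfl
      simp [Nat.card_unique]
    · -- card s = m + 1, m ≥ 1
      obtain ⟨a, ha⟩ := Multiset.exists_mem_of_ne_zero hne
      obtain ⟨s', rfl⟩ := Multiset.exists_cons_of_mem ha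
      have hcard' : Multiset.card s' = m := by
        rw [Multiset.card_cons] at hcard; omega
      have hnd' : s'.Nodup := (Multiset.nodup_cons.mp hnd).2
      have has' : a ∉ s' := (Multiset.nodup_cons.mp hnd).1
      have hne' : s' ≠ 0 := by
        intro h; rw [h] at hcard'; simp at hcard'; omega
      -- the bijection
      have key : ∀ (t' : {t : BT α // t.leaves = a ::ₘ s'}),
          t'.1 ∈ ins a (del a t'.1) ∧ (del a t'.1).leaves = s' := by
        rintro ⟨t', ht'⟩
        have hmem : t' ∈ ins a (del a t') := by
          apply mem_ins_del
          · rw [ht']; exact hnd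
          · rw [ht']; exact Multiset.mem_cons_self a s'
          · intro b hb
            have hcc : Multiset.card t'.leaves = Multiset.card s' + 1 := by
              rw [ht']; simp
            rw [hb, show (leaf b : BT α).leaves = {b} from rfl,
              Multiset.card_singleton] at hcc
            omega
        refine ⟨hmem, ?_⟩
        have := leaves_of_mem_ins hmem
        rw [ht'] at this
        exact (Multiset.cons_inj_right a).mp this.symm
      have hlen : ∀ (t : {t : BT α // t.leaves = s'}),
          (ins a t.1).length = 2 * (2 * m - 1) := by
        rintro ⟨t, ht⟩
        rw [length_ins, ht, hcard']
      let e : {t : BT α // t.leaves = a ::ₘ s'} ≃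
          ({t : BT α // t.leaves = s'} × Fin (2 * (2 * m - 1))) :=
        { toFun := fun t' =>
            (⟨del a t'.1, (key t').2⟩,
             ⟨List.idxOf t'.1 (ins a (del a t'.1)), by
                have h1 := List.idxOf_lt_length_iff.mpr (key t').1
                have h2 : (ins a (del a t'.1)).length = 2 * (2 * m - 1) :=
                  hlen ⟨del a t'.1, (key t').2⟩
                omega⟩)
          invFun := fun p =>
            ⟨(ins a p.1.1).get ⟨p.2.1, by rw [hlen p.1]; exact p.2.2⟩, by
              have hmem : (ins a p.1.1).get ⟨p.2.1, by rw [hlen p.1]; exact p.2.2⟩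
                  ∈ ins a p.1.1 := List.get_mem _ _
              rw [leaves_of_mem_ins hmem, p.1.2]⟩
          left_inv := fun t' => by
            apply Subtype.ext
            exact List.idxOf_get (List.idxOf_lt_length_iff.mpr (key t').1)
          right_inv := fun p => by
            have has'' : a ∉ p.1.1.leaves := by rw [p.1.2]; exact has'
            have hmem : (ins a p.1.1).get ⟨p.2.1, by rw [hlen p.1]; exact p.2.2⟩
                ∈ ins a p.1.1 := List.get_mem _ _
            have hdel : del a ((ins a p.1.1).get
                ⟨p.2.1, by rw [hlen p.1]; exact p.2.2⟩) = p.1.1 :=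
              del_of_mem_ins has'' hmem
            refine Prod.ext (Subtype.ext ?_) (Fin.ext ?_)
            · exact hdel
            · show List.idxOf _ (ins a (del a _)) = p.2.1
              rw [hdel]
              exact List.get_idxOf (nodup_ins has'') _ }
      rw [Nat.card_congr e, Nat.card_prod, ih s' hcard' hnd' hne',
        Nat.card_eq_fintype_card, Fintype.card_fin]
      -- arithmetic
      rcases Nat.exists_eq_add_of_le hm with ⟨j, rfl⟩
      rcases Nat.eq_zero_or_pos j with rfl | hj
      · decide
      · rcases Nat.exists_eq_add_of_le hj with ⟨i, rfl⟩
        have e1 : 2 * (1 + (1 + i) + 1) - 3 = (2 * i + 1) + 2 := by omega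
        have e2 : 2 * (1 + (1 + i)) - 3 = 2 * i + 1 := by omega
        rw [e1, e2, Nat.doubleFactorial]
        have e3 : 1 + (1 + i) - 1 = i + 1 := by omega
        have e4 : 1 + (1 + i) + 1 - 1 = i + 2 := by omega
        have e5 : 2 * (2 * (1 + (1 + i)) - 1) = 2 * (2 * i + 3) := by omega
        rw [e3, e4, e5, pow_succ]
        ring

/-- All trees obtained from `t` by swapping children of internal nodes. -/
def flips : BT α → Finset (BT α)
  | .leaf a => {.leaf a}
  | .node l r =>
      ((flips l ×ˢ flips r).image fun p => node p.1 p.2) ∪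
        ((flips l ×ˢ flips r).image fun p => node p.2 p.1)

theorem mem_flips_node {l r s : BT α} :
    s ∈ flips (node l r) ↔
      (∃ x ∈ flips l, ∃ y ∈ flips r, s = node x y) ∨
      (∃ x ∈ flips l, ∃ y ∈ flips r, s = node y x) := by
  simp only [flips, Finset.mem_union, Finset.mem_image, Finset.mem_product, Prod.exists]
  constructor
  · rintro (⟨x, y, ⟨hx, hy⟩, rfl⟩ | ⟨x, y, ⟨hx, hy⟩, rfl⟩)
    · exact Or.inl ⟨x, hx, y, hy, rfl⟩
    · exact Or.inr ⟨x, hx, y, hy, rfl⟩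
  · rintro (⟨x, hx, y, hy, rfl⟩ | ⟨x, hx, y, hy, rfl⟩)
    · exact Or.inl ⟨x, y, ⟨hx, hy⟩, rfl⟩
    · exact Or.inr ⟨x, y, ⟨hx, hy⟩, rfl⟩

theorem leaves_of_mem_flips {t s : BT α} (h : s ∈ flips t) : s.leaves = t.leaves := by
  induction t generalizing s with
  | leaf a => simp [flips] at h; subst h; rfl
  | node l r ihl ihr =>
    rcases mem_flips_node.mp h with ⟨x, hx, y, hy, rfl⟩ | ⟨x, hx, y, hy, rfl⟩
    · show x.leaves + y.leaves = l.leaves + r.leaves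
      rw [ihl hx, ihr hy]
    · show y.leaves + x.leaves = l.leaves + r.leaves
      rw [ihl hx, ihr hy, add_comm]

theorem mem_flips_self (t : BT α) : t ∈ flips t := by
  induction t with
  | leaf a => simp [flips]
  | node l r ihl ihr => exact mem_flips_node.mpr (Or.inl ⟨l, ihl, r, ihr, rfl⟩)

theorem mem_flips_symm {t s : BT α} (h : s ∈ flips t) : t ∈ flips s := by
  induction t generalizing s with
  | leaf a => simp [flips] at h; subst h; simp [flips]
  | node l r ihl ihr =>
    rcases mem_flips_node.mp h with ⟨x, hx, y, hy, rfl⟩ | ⟨x, hx, y, hy, rfl⟩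
    · exact mem_flips_node.mpr (Or.inl ⟨l, ihl hx, r, ihr hy, rfl⟩)
    · exact mem_flips_node.mpr (Or.inr ⟨r, ihr hy, l, ihl hx, rfl⟩)

theorem mem_flips_trans {t s u : BT α} (h1 : u ∈ flips s) (h2 : s ∈ flips t) :
    u ∈ flips t := by
  induction t generalizing s u with
  | leaf a =>
    simp [flips] at h2; subst h2; simp [flips] at h1; subst h1; simp [flips]
  | node l r ihl ihr =>
    rcases mem_flips_node.mp h2 with ⟨x, hx, y, hy, rfl⟩ | ⟨x, hx, y, hy, rfl⟩ <;>
      rcases mem_flips_node.mp h1 with ⟨x', hx', y', hy', rfl⟩ | ⟨x', hx', y', hy', rfl⟩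
    · exact mem_flips_node.mpr (Or.inl ⟨x', ihl hx' hx, y', ihr hy' hy, rfl⟩)
    · exact mem_flips_node.mpr (Or.inr ⟨x', ihl hx' hx, y', ihr hy' hy, rfl⟩)
    · exact mem_flips_node.mpr (Or.inr ⟨y', ihl hy' hx, x', ihr hx' hy, rfl⟩)
    · exact mem_flips_node.mpr (Or.inl ⟨y', ihl hy' hx, x', ihr hx' hy, rfl⟩)

theorem equiv_iff_mem_flips {s t : BT α} : BT.Equiv s t ↔ s ∈ flips t := by
  constructor
  · intro h
    induction h with
    | refl t => exact mem_flips_self t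
    | symm _ ih => exact mem_flips_symm ih
    | trans _ _ ih1 ih2 => exact mem_flips_trans ih1 ih2
    | swap l r => exact mem_flips_node.mpr (Or.inr ⟨r, mem_flips_self r, l, mem_flips_self l, rfl⟩)
    | congr _ _ ih1 ih2 => exact mem_flips_node.mpr (Or.inl ⟨_, ih1, _, ih2, rfl⟩)
  · intro h
    induction t generalizing s with
    | leaf a => simp [flips] at h; subst h; exact BT.Equiv.refl _
    | node l r ihl ihr =>
      rcases mem_flips_node.mp h with ⟨x, hx, y, hy, rfl⟩ | ⟨x, hx, y, hy, rfl⟩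
      · exact BT.Equiv.congr (ihl hx) (ihr hy)
      · exact BT.Equiv.trans (BT.Equiv.congr (ihr hy) (ihl hx)) (BT.Equiv.swap _ _)

theorem card_flips {t : BT α} (hnd : t.leaves.Nodup) :
    (flips t).card = 2 ^ (Multiset.card t.leaves - 1) := by
  induction t with
  | leaf a => simp [flips, leaves]
  | node l r ihl ihr =>
    have hll : l.leaves.Nodup := (Multiset.nodup_add.mp hnd).1
    have hrr : r.leaves.Nodup := (Multiset.nodup_add.mp hnd).2.1
    have hdisj := (Multiset.nodup_add.mp hnd).2.2
    have hinj1 : Function.Injective (fun p : BT α × BT α => node p.1 p.2) := by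
      rintro ⟨x, y⟩ ⟨x', y'⟩ h
      injection h with h1 h2
      exact Prod.ext h1 h2
    have hinj2 : Function.Injective (fun p : BT α × BT α => node p.2 p.1) := by
      rintro ⟨x, y⟩ ⟨x', y'⟩ h
      injection h with h1 h2
      exact Prod.ext h2 h1
    have hdis : Disjoint ((flips l ×ˢ flips r).image fun p => node p.1 p.2)
        ((flips l ×ˢ flips r).image fun p => node p.2 p.1) := by
      rw [Finset.disjoint_left]
      rintro u hu hv
      simp only [Finset.mem_image, Finset.mem_product, Prod.exists] at hu hv
      obtain ⟨x, y, ⟨hx, hy⟩, rfl⟩ := hu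
      obtain ⟨x', y', ⟨hx', hy'⟩, h⟩ := hv
      injection h.symm with h1 h2
      -- x = y', so leaves l = leaves r, contradiction
      obtain ⟨b, hb⟩ := Multiset.exists_mem_of_ne_zero l.leaves_ne_zero
      have hbx : b ∈ x.leaves := by rw [leaves_of_mem_flips hx]; exact hb
      have hby' : b ∈ y'.leaves := h1 ▸ hbx
      rw [leaves_of_mem_flips hy'] at hby'
      exact (Multiset.disjoint_left.mp hdisj hb) hby'
    rw [flips, Finset.card_union_of_disjoint hdis, Finset.card_image_of_injective _ hinj1,
      Finset.card_image_of_injective _ hinj2, Finset.card_product, ihl hll, ihr hrr]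
    have h1 := l.card_leaves_pos
    have h2 := r.card_leaves_pos
    show _ = 2 ^ (Multiset.card (l.leaves + r.leaves) - 1)
    rw [Multiset.card_add]
    rw [← pow_add, ← two_mul, ← pow_succ']
    congr 1
    omega

end BT



/-- Binary trees whose leaves are exactly the `n` labels `{0, ..., n-1}` (each once),
regarded up to reordering of children: these are the binary tree topologies with `n`
distinguishable leaves. -/
def labTreeSetoid (n : ℕ) :
    Setoid {t : BT (Fin n) // t.leaves = (Finset.univ : Finset (Fin n)).1} :=
  ⟨fun a b => BT.Equiv a.1 b.1,
    ⟨fun a => BT.Equiv.refl a.1, BT.Equiv.symm, BT.Equiv.trans⟩⟩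

/-- The number of binary tree topologies with `n ≥ 1` distinguishable (labelled) leaves
is the double factorial `(2n-3)!!` (with `(2·1-3)!! = 1` for `n = 1`). -/
theorem card_binaryTreeTopologies (n : ℕ) (hn : 1 ≤ n) :
    Nat.card (Quotient (labTreeSetoid n)) = Nat.doubleFactorial (2 * n - 3) := by
  classical
  set s : Multiset (Fin n) := (Finset.univ : Finset (Fin n)).1 with hs
  have hcard : Multiset.card s = n := by
    rw [hs, ← Finset.card_def, Finset.card_univ, Fintype.card_fin]
  have hnd : s.Nodup := Finset.univ.nodup
  have hne : s ≠ 0 := by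
    intro h
    rw [h] at hcard
    simp at hcard
    omega
  have hSub : Nat.card {t : BT (Fin n) // t.leaves = s} =
      2 ^ (n - 1) * Nat.doubleFactorial (2 * n - 3) :=
    BT.card_subtype_leaves n s hcard hnd hne
  have hfin : Finite {t : BT (Fin n) // t.leaves = s} := by
    apply Nat.finite_of_card_ne_zero
    rw [hSub]
    have h1 := pow_pos (show (0:ℕ) < 2 by norm_num) (n - 1)
    have h2 := Nat.doubleFactorial_pos (2 * n - 3)
    positivity
  have hfq : Finite (Quotient (labTreeSetoid n)) := Quotient.finite _
  have instq : Fintype (Quotient (labTreeSetoid n)) := Fintype.ofFinite _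
  have instS : Fintype {t : BT (Fin n) // t.leaves = s} := Fintype.ofFinite _
  -- each fiber of the quotient map has cardinality 2 ^ (n-1)
  have hfiber : ∀ c : Quotient (labTreeSetoid n),
      Nat.card {x : {t : BT (Fin n) // t.leaves = s} //
        Quotient.mk (labTreeSetoid n) x = c} = 2 ^ (n - 1) := by
    intro c
    induction c using Quotient.inductionOn with
    | h t₀ =>
      have e : {x : {t : BT (Fin n) // t.leaves = s} //
          Quotient.mk (labTreeSetoid n) x = Quotient.mk (labTreeSetoid n) t₀} ≃
          {u : BT (Fin n) // u ∈ BT.flips t₀.1} :=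
        { toFun := fun x => ⟨x.1.1, BT.equiv_iff_mem_flips.mp (Quotient.exact x.2)⟩
          invFun := fun u => ⟨⟨u.1, by rw [BT.leaves_of_mem_flips u.2, t₀.2]⟩,
            Quotient.sound (BT.equiv_iff_mem_flips.mpr u.2)⟩
          left_inv := fun x => by apply Subtype.ext; apply Subtype.ext; rfl
          right_inv := fun u => by apply Subtype.ext; rfl }
      rw [Nat.card_congr e, Nat.card_eq_fintype_card, Fintype.card_coe,
        BT.card_flips (by rw [t₀.2]; exact hnd), t₀.2, hcard]
  -- sum over fibers
  have hsum : Nat.card {t : BT (Fin n) // t.leaves = s} =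
      Nat.card (Quotient (labTreeSetoid n)) * 2 ^ (n - 1) := by
    rw [Nat.card_congr (Equiv.sigmaFiberEquiv
      (fun x : {t : BT (Fin n) // t.leaves = s} => Quotient.mk (labTreeSetoid n) x)).symm]
    rw [Nat.card_eq_fintype_card, Fintype.card_sigma]
    rw [Nat.card_eq_fintype_card]
    rw [Finset.sum_congr rfl (fun c _ => by
      rw [← Nat.card_eq_fintype_card, hfiber c])]
    rw [Finset.sum_const, Finset.card_univ, smul_eq_mul]
  rw [hsum] at hSub
  have hpow : 0 < 2 ^ (n - 1) := pow_pos (show (0:ℕ) < 2 by norm_num) _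
  calc Nat.card (Quotient (labTreeSetoid n))
      = Nat.card (Quotient (labTreeSetoid n)) * 2 ^ (n - 1) / 2 ^ (n - 1) := by
        rw [Nat.mul_div_cancel _ hpow]
    _ = 2 ^ (n - 1) * Nat.doubleFactorial (2 * n - 3) / 2 ^ (n - 1) := by rw [hSub]
    _ = Nat.doubleFactorial (2 * n - 3) := by rw [Nat.mul_div_cancel_left _ hpow]
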